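/- arXiv:2402.06705 — 2 statements merged into one kernel-verified Lean document; each statement's English description precedes it below -/
import Mathlib

section
/- Let G be a finite group and x, y ∈ G two p-elements (for the same prime p) with coprime conjugacy class sizes |x^G| and |y^G|. Then xy = yx. -/
def classSet {G : Type*} [Group G] (x : G) : Set G := {y | IsConj x y}

noncomputable def classSize {G : Type*} [Group G] (x : G) : ℕ := Nat.card (classSet x)

lemma classSize_eq_index {G : Type*} [Group G] [Finite G] (x : G) :
    classSize x = (Subgroup.centralizer {x}).index := by
  have hset : classSet x = MulAction.orbit (ConjAct G) x := by
    ext g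
    exact ⟨fun hg => ConjAct.mem_orbit_conjAct.mpr hg.symm,
      fun hg => (ConjAct.mem_orbit_conjAct.mp hg).symm⟩
  rw [Subgroup.centralizer_eq_comap_stabilizer]
  erw [Subgroup.index_comap_of_surjective _ (MulEquiv.surjective _)]
  rw [MulAction.index_stabilizer, classSize, hset, Nat.card_coe_set_eq]

/-- A central `p`-element lies in every subgroup of index prime to `p`. -/
lemma central_mem_of_not_dvd_index {G : Type*} [Group G] [Finite G] {p : ℕ} [Fact p.Prime]
    {y : G} {b : ℕ} (hy : orderOf y = p ^ b) (hc : y ∈ Subgroup.center G)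
    {L : Subgroup G} (hL : ¬ p ∣ L.index) : y ∈ L := by
  obtain ⟨P⟩ : Nonempty (Sylow p L) := inferInstance
  have hinj : Function.Injective L.subtype := L.subtype_injective
  have hcardmap : Nat.card ((P : Subgroup L).map L.subtype) = Nat.card (P : Subgroup L) :=
    Nat.card_congr (Subgroup.equivMapOfInjective _ _ hinj).toEquiv.symm
  have hLpos : Nat.card L ≠ 0 := Nat.card_pos.ne'
  have hIpos : L.index ≠ 0 := Subgroup.index_ne_zero_of_finite
  have hfac : (Nat.card G).factorization p = (Nat.card L).factorization p := by
    rw [← L.card_mul_index, Nat.factorization_mul hLpos hIpos]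
    simp [Nat.factorization_eq_zero_of_not_dvd hL]
  have hcard : Nat.card ((P : Subgroup L).map L.subtype)
      = p ^ (Nat.card G).factorization p := by
    rw [hcardmap, Sylow.card_eq_multiplicity, hfac]
  let Q : Sylow p G := Sylow.ofCard _ hcard
  have hzP : IsPGroup p (Subgroup.zpowers y) := by
    rw [IsPGroup.iff_card]
    exact ⟨b, by rw [Nat.card_zpowers, hy]⟩
  have hnorm : Subgroup.zpowers y ⊓ Subgroup.normalizer ((Q : Subgroup G) : Set G)
      = Subgroup.zpowers y ⊓ (Q : Subgroup G) := hzP.inf_normalizer_sylow Q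
  have hyQ : y ∈ (Q : Subgroup G) := by
    have hy1 : y ∈ Subgroup.zpowers y ⊓ Subgroup.normalizer ((Q : Subgroup G) : Set G) :=
      ⟨Subgroup.mem_zpowers y, Subgroup.center_le_normalizer _ hc⟩
    exact (hnorm ▸ hy1).2
  have hQL : (Q : Subgroup G) ≤ L := by
    show ((P : Subgroup L).map L.subtype : Subgroup G) ≤ L
    rintro g ⟨g', _, rfl⟩
    exact g'.2
  exact hQL hyQ

theorem stmt3 {G : Type*} [Group G] [Finite G] (p : ℕ) (hp : p.Prime) (x y : G)
    (hx : ∃ a : ℕ, orderOf x = p ^ a) (hy : ∃ b : ℕ, orderOf y = p ^ b)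
    (h : Nat.Coprime (classSize x) (classSize y)) :
    Commute x y := by
  have : Fact p.Prime := ⟨hp⟩
  rw [classSize_eq_index, classSize_eq_index] at h
  -- main case: `p` does not divide the index of the centralizer of `u`
  have key : ∀ u v : G, (∃ a : ℕ, orderOf u = p ^ a) → (∃ b : ℕ, orderOf v = p ^ b) →
      Nat.Coprime (Subgroup.centralizer {u}).index (Subgroup.centralizer {v}).index →
      ¬ p ∣ (Subgroup.centralizer {u}).index → Commute u v := by
    intro u v hu hv hco hpu
    obtain ⟨b, hvb⟩ := hv
    set Cu := Subgroup.centralizer {u} with hCu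
    set K := Subgroup.centralizer {v} with hK
    -- the relative index of Cu in K equals Cu.index
    have hIpos : (Cu ⊓ K).index ≠ 0 := Subgroup.index_ne_zero_of_finite
    have hmul : Cu.relIndex K * K.index = (Cu ⊓ K).index := by
      rw [← Subgroup.inf_relIndex_right]
      exact Subgroup.relIndex_mul_index inf_le_right
    have hdvd : Cu.index ∣ Cu.relIndex K * K.index := by
      rw [hmul]; exact Subgroup.index_dvd_of_le inf_le_left
    have hdvd2 : Cu.index ∣ Cu.relIndex K := hco.dvd_of_dvd_mul_right hdvd
    have hr0 : Cu.relIndex K ≠ 0 := fun h0 => hIpos (by rw [← hmul, h0, zero_mul])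
    have hle : Cu.relIndex K ≤ Cu.index := by
      have := Subgroup.relIndex_le_of_le_right (le_top : K ≤ ⊤)
        (by rw [Subgroup.relIndex_top_right]; exact Subgroup.index_ne_zero_of_finite (H := Cu))
      rwa [Subgroup.relIndex_top_right] at this
    have hreq : Cu.relIndex K = Cu.index :=
      le_antisymm hle (Nat.le_of_dvd (Nat.pos_of_ne_zero hr0) hdvd2)
    have hrp : ¬ p ∣ (Cu.subgroupOf K).index := by
      show ¬ p ∣ Cu.relIndex K
      rw [hreq]; exact hpu
    -- v as an element of K is central
    have hvK : v ∈ K := by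
      rw [hK, Subgroup.mem_centralizer_iff]
      intro h hh
      simp only [Set.mem_singleton_iff] at hh
      rw [hh]
    have hvc : (⟨v, hvK⟩ : K) ∈ Subgroup.center K := by
      rw [Subgroup.mem_center_iff]
      intro g
      have := Subgroup.mem_centralizer_iff.mp g.2 v rfl
      exact Subtype.ext this.symm
    have hvord : orderOf (⟨v, hvK⟩ : K) = p ^ b := by rw [Subgroup.orderOf_mk, hvb]
    have hv2 : (⟨v, hvK⟩ : K) ∈ Cu.subgroupOf K :=
      central_mem_of_not_dvd_index hvord hvc hrp
    have hvCu : v ∈ Cu := (Subgroup.mem_subgroupOf).mp hv2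
    exact Subgroup.mem_centralizer_iff.mp hvCu u rfl
  by_cases hpx : p ∣ (Subgroup.centralizer {x}).index
  · have hpy : ¬ p ∣ (Subgroup.centralizer {y}).index := fun hpy =>
      hp.one_lt.ne' (Nat.eq_one_of_dvd_coprimes h hpx hpy ▸ rfl)
    exact (key y x hy hx h.symm hpy).symm
  · exact key x y hx hy h hpx
end

section
/- Let G be a finite group, N ⊴ G, and B = b^G, C = c^G noncentral G-classes in N with gcd(|B|,|C|) = 1, |B| < |C|, and distance at least 3 between B and C in Γ_G(N). Then |BC| = |C|, C·B·B^{-1} = C, C·⟨BB^{-1}⟩ = C, ⟨BB^{-1}⟩ ⊆ ⟨CC^{-1}⟩, and |⟨BB^{-1}⟩| divides |C|. -/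
open Pointwise

/-- The graph `Γ_G(N)` on the noncentral elements of `N` (each `G`-class blown up to a
clique of mutually conjugate elements, which does not affect distances between distinct
classes nor connectedness): two vertices are adjacent iff their `G`-class sizes are not
coprime. -/
noncomputable def classGraph (G : Type*) [Group G] (N : Subgroup G) :
    SimpleGraph {x : G // x ∈ N ∧ x ∉ Subgroup.center G} where
  Adj a b := a ≠ b ∧ ¬ Nat.Coprime (classSize a.1) (classSize b.1)
  symm := ⟨fun a b hab => ⟨hab.1.symm, fun hco => hab.2 hco.symm⟩⟩
  loopless := ⟨fun a ha => ha.1 rfl⟩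

section Aux

variable {G : Type*} [Group G]

lemma mem_classSet_iff {x y : G} : y ∈ classSet x ↔ IsConj x y := Iff.rfl

lemma self_mem_classSet (x : G) : x ∈ classSet x := IsConj.refl x

lemma classSet_eq_of_isConj {x y : G} (h : IsConj x y) : classSet x = classSet y := by
  ext z
  exact ⟨fun hz => h.symm.trans hz, fun hz => h.trans hz⟩

lemma conj_mem_classSet {x y : G} (h : y ∈ classSet x) (g : G) :
    g * y * g⁻¹ ∈ classSet x :=
  h.trans (isConj_iff.mpr ⟨g, rfl⟩)

lemma classSize_eq_index_s11 (x : G) :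
    classSize x = (MulAction.stabilizer (ConjAct G) x).index := by
  have h : classSet x = MulAction.orbit (ConjAct G) x := by
    ext y
    rw [mem_classSet_iff, ConjAct.mem_orbit_conjAct, isConj_comm]
  rw [classSize, h, MulAction.index_stabilizer, Nat.card_coe_set_eq]

variable [Finite G]

lemma index_inf_eq {H K : Subgroup G} (h : Nat.Coprime H.index K.index) :
    (H ⊓ K).index = H.index * K.index := by
  have h1 : H.index * K.index ∣ (H ⊓ K).index :=
    Nat.Coprime.mul_dvd_of_dvd_of_dvd h (Subgroup.index_dvd_of_le inf_le_left)
      (Subgroup.index_dvd_of_le inf_le_right)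
  have h2 : (H ⊓ K).index ≠ 0 := Subgroup.index_ne_zero_of_finite
  exact le_antisymm Subgroup.index_inf_le (Nat.le_of_dvd (Nat.pos_of_ne_zero h2) h1)

lemma exists_mul_of_coprime_index {H K : Subgroup G} (h : Nat.Coprime H.index K.index)
    (g : G) : ∃ k ∈ K, ∃ u ∈ H, g = k * u := by
  have hK0 : K.index ≠ 0 := Subgroup.index_ne_zero_of_finite
  have hrel : H.relIndex K = H.index := by
    have h1 : (H ⊓ K).relIndex K * K.index = (H ⊓ K).index :=
      Subgroup.relIndex_mul_index inf_le_right
    rw [Subgroup.inf_relIndex_right, index_inf_eq h] at h1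
    exact Nat.eq_of_mul_eq_mul_right (Nat.pos_of_ne_zero hK0) h1
  let f : K ⧸ H.subgroupOf K → G ⧸ H :=
    Quotient.map' Subtype.val (fun a b hab => by
      rw [QuotientGroup.leftRel_apply] at hab ⊢
      simpa [Subgroup.mem_subgroupOf] using hab)
  have hinj : Function.Injective f := by
    intro q1 q2
    induction q1 using Quotient.ind'
    induction q2 using Quotient.ind'
    intro hq
    apply Quotient.sound'
    rw [QuotientGroup.leftRel_apply]
    have hq' := Quotient.exact' hq
    rw [QuotientGroup.leftRel_apply] at hq'
    simpa [Subgroup.mem_subgroupOf] using hq'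
  have hcard : Nat.card (K ⧸ H.subgroupOf K) = Nat.card (G ⧸ H) := hrel
  have hbij : Function.Bijective f :=
    (Nat.bijective_iff_injective_and_card f).mpr ⟨hinj, hcard⟩
  obtain ⟨q, hq⟩ := hbij.2 (QuotientGroup.mk g : G ⧸ H)
  induction q using Quotient.ind' with
  | _ k =>
    have hk : QuotientGroup.mk (k : G) = (QuotientGroup.mk g : G ⧸ H) := hq
    have hu : (k : G)⁻¹ * g ∈ H := QuotientGroup.eq.mp hk
    exact ⟨k, k.2, (k : G)⁻¹ * g, hu, by group⟩

lemma classSet_mul_classSet (b c : G) (h : Nat.Coprime (classSize b) (classSize c)) :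
    classSet b * classSet c = classSet (b * c) := by
  have hco' : Nat.Coprime (MulAction.stabilizer (ConjAct G) c).index
      (MulAction.stabilizer (ConjAct G) b).index := by
    rw [← classSize_eq_index_s11, ← classSize_eq_index_s11]
    exact h.symm
  haveI : Finite (ConjAct G) := inferInstanceAs (Finite G)
  ext y
  rw [Set.mem_mul]
  constructor
  · rintro ⟨y1, hy1, y2, hy2, rfl⟩
    obtain ⟨g, rfl⟩ := isConj_iff.mp hy1
    obtain ⟨t, rfl⟩ := isConj_iff.mp hy2
    obtain ⟨k, hk, u, hu, hku⟩ :=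
      exists_mul_of_coprime_index hco' (ConjAct.toConjAct (g⁻¹ * t))
    set k' := ConjAct.ofConjAct k with hk'
    set u' := ConjAct.ofConjAct u with hu'
    have hkb : k' * b * k'⁻¹ = b := by
      have := MulAction.mem_stabilizer_iff.mp hk
      rwa [ConjAct.smul_def] at this
    have huc : u' * c * u'⁻¹ = c := by
      have := MulAction.mem_stabilizer_iff.mp hu
      rwa [ConjAct.smul_def] at this
    have ht : t = g * (k' * u') := by
      have := congrArg ConjAct.ofConjAct hku
      rw [ConjAct.ofConjAct_toConjAct, map_mul] at this
      rw [← hk', ← hu'] at this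
      rw [← this]
      group
    refine mem_classSet_iff.mpr (isConj_iff.mpr ⟨g * k', ?_⟩)
    rw [ht]
    calc (g * k') * (b * c) * (g * k')⁻¹
        = g * (k' * b * k'⁻¹) * (k' * c * k'⁻¹) * g⁻¹ := by group
      _ = g * b * (k' * c * k'⁻¹) * g⁻¹ := by rw [hkb]
      _ = g * b * (k' * (u' * c * u'⁻¹) * k'⁻¹) * g⁻¹ := by rw [huc]
      _ = g * b * g⁻¹ * (g * (k' * u') * c * (g * (k' * u'))⁻¹) := by group
  · intro hy
    obtain ⟨g, rfl⟩ := isConj_iff.mp hy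
    exact ⟨g * b * g⁻¹, conj_mem_classSet (self_mem_classSet b) g,
      g * c * g⁻¹, conj_mem_classSet (self_mem_classSet c) g, by group⟩

lemma classSize_mul_dvd (b c : G) (h : Nat.Coprime (classSize b) (classSize c)) :
    classSize (b * c) ∣ classSize b * classSize c := by
  haveI : Finite (ConjAct G) := inferInstanceAs (Finite G)
  have hle : MulAction.stabilizer (ConjAct G) b ⊓ MulAction.stabilizer (ConjAct G) c ≤
      MulAction.stabilizer (ConjAct G) (b * c) := by
    intro g hg
    rw [Subgroup.mem_inf] at hg
    obtain ⟨hgb, hgc⟩ := hg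
    rw [MulAction.mem_stabilizer_iff, ConjAct.smul_def] at hgb hgc ⊢
    calc ConjAct.ofConjAct g * (b * c) * (ConjAct.ofConjAct g)⁻¹
        = (ConjAct.ofConjAct g * b * (ConjAct.ofConjAct g)⁻¹) *
          (ConjAct.ofConjAct g * c * (ConjAct.ofConjAct g)⁻¹) := by group
      _ = b * c := by rw [hgb, hgc]
  have h1 : classSize (b * c) ∣
      (MulAction.stabilizer (ConjAct G) b ⊓ MulAction.stabilizer (ConjAct G) c).index := by
    rw [classSize_eq_index_s11]
    exact Subgroup.index_dvd_of_le hle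
  refine h1.trans ?_
  have hco' : Nat.Coprime (MulAction.stabilizer (ConjAct G) b).index
      (MulAction.stabilizer (ConjAct G) c).index := by
    rw [← classSize_eq_index_s11, ← classSize_eq_index_s11]; exact h
  rw [index_inf_eq hco', ← classSize_eq_index_s11, ← classSize_eq_index_s11]

lemma card_mul_singleton (S : Set G) (x : G) :
    Nat.card ↥(S * ({x} : Set G)) = Nat.card ↥S := by
  rw [Set.mul_singleton]
  exact Nat.card_image_of_injective (fun a b hab => by simpa using hab) S

lemma card_singleton_mul (S : Set G) (x : G) :
    Nat.card ↥(({x} : Set G) * S) = Nat.card ↥S := by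
  rw [Set.singleton_mul]
  exact Nat.card_image_of_injective (fun a b hab => by simpa using hab) S

lemma classSize_inv_mul_center (b z : G) (hz : z ∈ Subgroup.center G) :
    classSize (b⁻¹ * z) = classSize b := by
  have h : classSet (b⁻¹ * z) = (fun y => y⁻¹ * z) '' classSet b := by
    ext y'
    constructor
    · intro hy'
      obtain ⟨g, hg⟩ := isConj_iff.mp hy'
      refine ⟨g * b * g⁻¹, conj_mem_classSet (self_mem_classSet b) g, ?_⟩
      have hzc : g⁻¹ * z = z * g⁻¹ := Subgroup.mem_center_iff.mp hz g⁻¹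
      rw [← hg]
      calc (g * b * g⁻¹)⁻¹ * z = g * b⁻¹ * (g⁻¹ * z) := by group
        _ = g * b⁻¹ * (z * g⁻¹) := by rw [hzc]
        _ = g * (b⁻¹ * z) * g⁻¹ := by group
    · rintro ⟨y, hy, rfl⟩
      obtain ⟨g, hg⟩ := isConj_iff.mp hy
      refine mem_classSet_iff.mpr (isConj_iff.mpr ⟨g, ?_⟩)
      have hzc : g⁻¹ * z = z * g⁻¹ := Subgroup.mem_center_iff.mp hz g⁻¹
      rw [← hg]
      calc g * (b⁻¹ * z) * g⁻¹ = g * b⁻¹ * (z * g⁻¹) := by group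
        _ = g * b⁻¹ * (g⁻¹ * z) := by rw [hzc]
        _ = (g * b * g⁻¹)⁻¹ * z := by group
  rw [classSize, classSize, h,
    Nat.card_image_of_injective (fun a b hab => by simpa using hab)]

end Aux

theorem stmt11 {G : Type*} [Group G] [Finite G] (N : Subgroup G) (hN : N.Normal)
    (b c : G) (hb : b ∈ N ∧ b ∉ Subgroup.center G) (hc : c ∈ N ∧ c ∉ Subgroup.center G)
    (hco : Nat.Coprime (classSize b) (classSize c))
    (hsize : classSize b < classSize c)
    -- distance at least 3 between the classes of `b` and `c` in `Γ_G(N)`: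
    -- they are not adjacent and have no common neighbour
    (hdist : ¬ (classGraph G N).Adj ⟨b, hb⟩ ⟨c, hc⟩ ∧
      ∀ w, ¬ ((classGraph G N).Adj ⟨b, hb⟩ w ∧ (classGraph G N).Adj w ⟨c, hc⟩)) :
    Nat.card ↥(classSet b * classSet c) = Nat.card ↥(classSet c) ∧
    classSet c * classSet b * (classSet b)⁻¹ = classSet c ∧
    classSet c * (Subgroup.closure (classSet b * (classSet b)⁻¹) : Set G) = classSet c ∧
    Subgroup.closure (classSet b * (classSet b)⁻¹) ≤
      Subgroup.closure (classSet c * (classSet c)⁻¹) ∧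
    Nat.card ↥(Subgroup.closure (classSet b * (classSet b)⁻¹)) ∣ Nat.card ↥(classSet c) := by
  classical
  set B := classSet b with hBdef
  set C := classSet c with hCdef
  -- positivity of class sizes
  haveI : ∀ x : G, Nonempty ↥(classSet x) := fun x => ⟨⟨x, self_mem_classSet x⟩⟩
  have hpos : ∀ x : G, 0 < classSize x := fun x => Nat.card_pos
  -- b*c is in N and noncentral
  have hbcN : b * c ∈ N := N.mul_mem hb.1 hc.1
  have hbcZ : b * c ∉ Subgroup.center G := by
    intro hz
    have h1 : b⁻¹ * (b * c) = c := by group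
    have h2 : classSize c = classSize b := by
      rw [← h1]
      exact classSize_inv_mul_center b (b * c) hz
    omega
  -- products of the classes
  have hBC : B * C = classSet (b * c) := classSet_mul_classSet b c hco
  have hCB : C * B = classSet (b * c) := by
    rw [hCdef, hBdef, classSet_mul_classSet c b (Nat.Coprime.symm hco)]
    exact classSet_eq_of_isConj (isConj_iff.mpr ⟨b, by group⟩)
  have hdvd : classSize (b * c) ∣ classSize b * classSize c := classSize_mul_dvd b c hco
  -- |C| ≤ |BC|
  have hCle : classSize c ≤ classSize (b * c) := by
    have hsub : ({b} : Set G) * C ⊆ classSet (b * c) := by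
      rw [← hBC]
      exact Set.mul_subset_mul_right (Set.singleton_subset_iff.mpr (self_mem_classSet b))
    have := Nat.card_mono (Set.toFinite (classSet (b * c))) hsub
    rwa [card_singleton_mul] at this
  -- distance condition
  have hkey : Nat.Coprime (classSize b) (classSize (b * c)) ∨
      Nat.Coprime (classSize (b * c)) (classSize c) := by
    by_contra hcon
    push_neg at hcon
    have hne1 : (⟨b, hb⟩ : {x : G // x ∈ N ∧ x ∉ Subgroup.center G}) ≠ ⟨b * c, hbcN, hbcZ⟩ := by
      intro hEq
      have : b = b * c := congrArg Subtype.val hEq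
      have hc1 : c = 1 := by
        have := left_eq_mul.mp this
        exact this
      exact hc.2 (hc1 ▸ Subgroup.one_mem _)
    have hne2 : (⟨b * c, hbcN, hbcZ⟩ : {x : G // x ∈ N ∧ x ∉ Subgroup.center G}) ≠ ⟨c, hc⟩ := by
      intro hEq
      have : b * c = c := congrArg Subtype.val hEq
      have hb1 : b = 1 := mul_eq_right.mp this
      exact hb.2 (hb1 ▸ Subgroup.one_mem _)
    exact hdist.2 ⟨b * c, hbcN, hbcZ⟩ ⟨⟨hne1, hcon.1⟩, ⟨hne2, hcon.2⟩⟩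
  -- |BC| = |C|
  have hsizeD : classSize (b * c) = classSize c := by
    rcases hkey with h1 | h2
    · have hdc : classSize (b * c) ∣ classSize c :=
        Nat.Coprime.dvd_of_dvd_mul_left (Nat.Coprime.symm h1) hdvd
      exact le_antisymm (Nat.le_of_dvd (hpos c) hdc) hCle
    · have hdb : classSize (b * c) ∣ classSize b :=
        Nat.Coprime.dvd_of_dvd_mul_right h2 hdvd
      have := Nat.le_of_dvd (hpos b) hdb
      omega
  -- key: C * {x} = classSet (b*c) for every x in B
  have hCx : ∀ x ∈ B, C * ({x} : Set G) = classSet (b * c) := by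
    intro x hx
    apply Set.eq_of_subset_of_ncard_le
    · rw [← hCB]
      exact Set.mul_subset_mul_left (Set.singleton_subset_iff.mpr hx)
    · rw [← Nat.card_coe_set_eq, ← Nat.card_coe_set_eq, card_mul_singleton]
      exact hsizeD.le
    · exact Set.toFinite _
  have hP : ∀ x ∈ Subgroup.closure (B * B⁻¹), C * ({x} : Set G) = C := by
      intro x hx
      refine Subgroup.closure_induction (p := fun g _ => C * ({g} : Set G) = C)
        ?_ (by simp) ?_ ?_ hx
      · rintro g hg
        rw [Set.mem_mul] at hg
        obtain ⟨b1, hb1, z, hz, rfl⟩ := hg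
        rw [Set.mem_inv] at hz
        calc C * {b1 * z} = C * {b1} * {z} := by
              rw [mul_assoc, Set.singleton_mul_singleton]
          _ = C * {z⁻¹} * {z} := by rw [hCx b1 hb1, ← hCx z⁻¹ hz]
          _ = C * {z⁻¹ * z} := by rw [mul_assoc, Set.singleton_mul_singleton]
          _ = C := by simp
      · intro x y _ _ hxI hyI
        calc C * {x * y} = C * {x} * {y} := by rw [mul_assoc, Set.singleton_mul_singleton]
          _ = C * {y} := by rw [hxI]
          _ = C := hyI
      · intro x _ hxI
        calc C * {x⁻¹} = C * {x} * {x⁻¹} := by rw [hxI]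
          _ = C * {x * x⁻¹} := by rw [mul_assoc, Set.singleton_mul_singleton]
          _ = C := by simp
  refine ⟨?_, ?_, ?_, ?_, ?_⟩
  · -- |BC| = |C|
    rw [hBC]
    exact hsizeD
  · -- C * B * B⁻¹ = C
    ext x
    constructor
    · intro hx
      rw [Set.mem_mul] at hx
      obtain ⟨y, hy, z, hz, rfl⟩ := hx
      rw [Set.mem_inv] at hz
      rw [hCB, ← hCx z⁻¹ hz, Set.mem_mul] at hy
      obtain ⟨c', hc', w, hw, rfl⟩ := hy
      rw [Set.mem_singleton_iff] at hw
      subst hw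
      simpa using hc'
    · intro hx
      rw [Set.mem_mul]
      refine ⟨x * b, Set.mul_mem_mul hx (self_mem_classSet b), b⁻¹, ?_, by group⟩
      rw [Set.mem_inv]
      simpa using self_mem_classSet b
  · -- C * ⟨BB⁻¹⟩ = C
    ext x
    constructor
    · intro hx
      rw [Set.mem_mul] at hx
      obtain ⟨y, hy, z, hz, rfl⟩ := hx
      rw [← hP z hz]
      exact Set.mul_mem_mul hy rfl
    · intro hx
      rw [Set.mem_mul]
      exact ⟨x, hx, 1, SetLike.mem_coe.mpr (Subgroup.one_mem _), mul_one x⟩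
  · -- ⟨BB⁻¹⟩ ≤ ⟨CC⁻¹⟩
    have hMconj : ∀ (g m : G), m ∈ Subgroup.closure (C * C⁻¹) →
        g * m * g⁻¹ ∈ Subgroup.closure (C * C⁻¹) := by
      intro g m hm
      refine Subgroup.closure_induction
        (p := fun m _ => g * m * g⁻¹ ∈ Subgroup.closure (C * C⁻¹)) ?_ ?_ ?_ ?_ hm
      · intro s hs
        rw [Set.mem_mul] at hs
        obtain ⟨c1, hc1, z, hz, rfl⟩ := hs
        rw [Set.mem_inv] at hz
        apply Subgroup.subset_closure
        rw [Set.mem_mul]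
        refine ⟨g * c1 * g⁻¹, conj_mem_classSet hc1 g, g * z * g⁻¹, ?_, by group⟩
        rw [Set.mem_inv]
        have hzz : (g * z * g⁻¹)⁻¹ = g * z⁻¹ * g⁻¹ := by group
        rw [hzz]
        exact conj_mem_classSet hz g
      · simpa using Subgroup.one_mem _
      · intro x y _ _ ihx ihy
        have := Subgroup.mul_mem _ ihx ihy
        rwa [show (g * x * g⁻¹) * (g * y * g⁻¹) = g * (x * y) * g⁻¹ by group] at this
      · intro x _ ihx
        have := Subgroup.inv_mem _ ihx
        rwa [show (g * x * g⁻¹)⁻¹ = g * x⁻¹ * g⁻¹ by group] at this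
    rw [Subgroup.closure_le]
    intro x hx
    have hx' : x ∈ Subgroup.closure (B * B⁻¹) := Subgroup.subset_closure hx
    have hcx : c * x ∈ C := by
      rw [← hP x hx']
      exact Set.mul_mem_mul (self_mem_classSet c) rfl
    have h1 : (c * x) * c⁻¹ ∈ C * C⁻¹ := by
      apply Set.mul_mem_mul hcx
      rw [Set.mem_inv]
      simpa using self_mem_classSet c
    have h2 : (c * x) * c⁻¹ ∈ Subgroup.closure (C * C⁻¹) := Subgroup.subset_closure h1
    have h3 := hMconj c⁻¹ _ h2
    rw [show c⁻¹ * ((c * x) * c⁻¹) * c⁻¹⁻¹ = x by group] at h3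
    exact h3
  · -- |⟨BB⁻¹⟩| divides |C|
    set H := Subgroup.closure (B * B⁻¹) with hHdef
    have hQ : C = QuotientGroup.mk ⁻¹' (QuotientGroup.mk '' C : Set (G ⧸ H)) := by
      apply Set.Subset.antisymm
      · exact Set.subset_preimage_image _ _
      · intro x hx
        obtain ⟨c', hc', hmk⟩ := hx
        have hmem : c'⁻¹ * x ∈ H := QuotientGroup.eq.mp hmk
        rw [← hP _ hmem]
        rw [Set.mem_mul]
        exact ⟨c', hc', c'⁻¹ * x, rfl, by group⟩
    have hcard : Nat.card ↥C =
        Nat.card H * Nat.card ↥(QuotientGroup.mk '' C : Set (G ⧸ H)) := by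
      calc Nat.card ↥C
          = Nat.card ↥(QuotientGroup.mk ⁻¹' (QuotientGroup.mk '' C : Set (G ⧸ H))) := by
            rw [← hQ]
        _ = Nat.card (↥H × ↥(QuotientGroup.mk '' C : Set (G ⧸ H))) :=
            Nat.card_congr (QuotientGroup.preimageMkEquivSubgroupProdSet H _)
        _ = _ := Nat.card_prod _ _
    exact ⟨_, hcard⟩
end
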